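/- Let φ : ℝ → ℝ be C² with φ'(z₀) = 0 and 1 ≤ φ''(z) ≤ C for all z, and let a : ℝ → ℂ be C¹ with sufficient decay. Then for t > 0, | ∫_{-∞}^{∞} e^{-itφ(z)} a(z) dz | ≲ ∫_{|z-z₀| < t^{-1/2}} |a(z)| dz + t^{-1} ∫_{|z-z₀| > t^{-1/2}} ( |a(z)|/|z-z₀|² + |a'(z)|/|z-z₀| ) dz. -/

import Mathlib

set_option autoImplicit false

open MeasureTheory Real Set

lemma st_deriv_zero_of_nonpos {x : ℝ} (hx : x ≤ 0) :
    deriv Real.smoothTransition x = 0 := by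
  rcases lt_or_eq_of_le hx with h | h
  · have hev : Real.smoothTransition =ᶠ[nhds x] fun _ => (0:ℝ) := by
      filter_upwards [Iio_mem_nhds h] with y hy
      exact Real.smoothTransition.zero_of_nonpos (le_of_lt hy)
    rw [hev.deriv_eq, deriv_const]
  · subst h
    exact IsLocalMin.deriv_eq_zero
      (Filter.Eventually.of_forall fun y => by
        simpa [Real.smoothTransition.zero] using Real.smoothTransition.nonneg y)

lemma st_deriv_zero_of_one_le {x : ℝ} (hx : 1 ≤ x) :
    deriv Real.smoothTransition x = 0 := by
  rcases lt_or_eq_of_le hx with h | h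
  · have hev : Real.smoothTransition =ᶠ[nhds x] fun _ => (1:ℝ) := by
      filter_upwards [Ioi_mem_nhds h] with y hy
      exact Real.smoothTransition.one_of_one_le (le_of_lt hy)
    rw [hev.deriv_eq, deriv_const]
  · subst h
    exact IsLocalMax.deriv_eq_zero
      (Filter.Eventually.of_forall fun y => by
        simpa [Real.smoothTransition.one] using Real.smoothTransition.le_one y)

lemma st_deriv_bound : ∃ M : ℝ, 0 ≤ M ∧ ∀ x, |deriv Real.smoothTransition x| ≤ M := by
  have hc : Continuous (deriv Real.smoothTransition) :=
    (Real.smoothTransition.contDiff (n := 1)).continuous_deriv le_rfl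
  obtain ⟨B, hB⟩ := (isCompact_Icc (a := (0:ℝ)) (b := 1)).exists_bound_of_continuousOn
    hc.continuousOn
  refine ⟨max B 0, le_max_right _ _, fun x => ?_⟩
  rcases le_or_gt x 0 with h | h
  · simp [st_deriv_zero_of_nonpos h]
  rcases le_or_gt 1 x with h1 | h1
  · simp [st_deriv_zero_of_one_le h1]
  · exact le_trans (by simpa using hB x ⟨le_of_lt h, le_of_lt h1⟩) (le_max_left _ _)

lemma phase_lb (φ : ℝ → ℝ) (z₀ : ℝ) (hφ : ContDiff ℝ 2 φ)
    (h0 : deriv φ z₀ = 0) (h1 : ∀ z, 1 ≤ deriv (deriv φ) z) :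
    ∀ z, |z - z₀| ≤ |deriv φ z| := by
  have hφ1 : ContDiff ℝ 1 (deriv φ) := by
    have h := (contDiff_succ_iff_deriv (n := 1)).mp hφ
    exact h.2.2
  have hφ'd : Differentiable ℝ (deriv φ) := hφ1.differentiable (by norm_num)
  have hg : Monotone (fun z => deriv φ z - z) := by
    apply monotone_of_deriv_nonneg
    · exact hφ'd.sub differentiable_id
    · intro x
      have : HasDerivAt (fun z => deriv φ z - z) (deriv (deriv φ) x - 1) x :=
        (hφ'd x).hasDerivAt.sub (hasDerivAt_id x)
      rw [this.deriv]
      linarith [h1 x]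
  intro z
  rcases le_total z₀ z with h | h
  · have := hg h
    simp only at this
    have hz : z - z₀ ≤ deriv φ z := by rw [h0] at this; linarith
    rw [abs_of_nonneg (by linarith : (0:ℝ) ≤ z - z₀)]
    exact le_trans hz (le_abs_self _)
  · have := hg h
    simp only at this
    have hz : deriv φ z ≤ z - z₀ := by rw [h0] at this; linarith
    rw [abs_of_nonpos (by linarith : z - z₀ ≤ 0)]
    calc -(z - z₀) ≤ -(deriv φ z) := by linarith
    _ ≤ |deriv φ z| := neg_le_abs _

noncomputable def ψaux (z₀ r z : ℝ) : ℝ :=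
  Real.smoothTransition (((z - z₀)^2 - r^2) / (3*r^2))

lemma ψaux_contDiff (z₀ r : ℝ) : ContDiff ℝ 1 (ψaux z₀ r) := by
  apply Real.smoothTransition.contDiff.comp
  exact (((contDiff_id.sub contDiff_const).pow 2).sub contDiff_const).div_const _

lemma ψaux_nonneg (z₀ r z : ℝ) : 0 ≤ ψaux z₀ r z := Real.smoothTransition.nonneg _
lemma ψaux_le_one (z₀ r z : ℝ) : ψaux z₀ r z ≤ 1 := Real.smoothTransition.le_one _

lemma ψaux_zero {z₀ r z : ℝ} (hr : 0 < r) (h : |z - z₀| ≤ r) : ψaux z₀ r z = 0 := by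
  apply Real.smoothTransition.zero_of_nonpos
  apply div_nonpos_of_nonpos_of_nonneg
  · nlinarith [sq_abs (z - z₀), abs_nonneg (z - z₀)]
  · positivity

lemma ψaux_one {z₀ r z : ℝ} (hr : 0 < r) (h : 2*r ≤ |z - z₀|) : ψaux z₀ r z = 1 := by
  apply Real.smoothTransition.one_of_one_le
  rw [le_div_iff₀ (by positivity)]
  nlinarith [sq_abs (z - z₀), abs_nonneg (z - z₀)]

lemma ψaux_hasDerivAt {z₀ r : ℝ} (hr : 0 < r) (z : ℝ) :
    HasDerivAt (ψaux z₀ r)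
      (deriv Real.smoothTransition (((z - z₀)^2 - r^2) / (3*r^2))
        * (2*(z - z₀)/(3*r^2))) z := by
  have hinner : HasDerivAt (fun z => ((z - z₀)^2 - r^2) / (3*r^2))
      (2*(z - z₀)/(3*r^2)) z := by
    have h1 : HasDerivAt (fun z : ℝ => ((z - z₀)^2 - r^2)) (2*(z - z₀)) z := by
      have := (((hasDerivAt_id z).sub_const z₀).pow 2).sub_const (r^2)
      simpa [mul_comm] using this
    simpa using h1.div_const (3*r^2)
  have hst : HasDerivAt Real.smoothTransition
      (deriv Real.smoothTransition (((z - z₀)^2 - r^2) / (3*r^2)))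
      (((z - z₀)^2 - r^2) / (3*r^2)) :=
    ((Real.smoothTransition.contDiff (n := 1)).differentiable (by norm_num) _).hasDerivAt
  exact hst.comp z hinner

lemma ψaux_deriv_zero {z₀ r z : ℝ} (hr : 0 < r) (h : |z - z₀| ≤ r) :
    deriv (ψaux z₀ r) z = 0 := by
  rw [(ψaux_hasDerivAt hr z).deriv]
  rw [st_deriv_zero_of_nonpos, zero_mul]
  apply div_nonpos_of_nonpos_of_nonneg
  · nlinarith [sq_abs (z - z₀), abs_nonneg (z - z₀)]
  · positivity

lemma ψaux_deriv_bound {z₀ r z M : ℝ} (hr : 0 < r) (hM : 0 ≤ M)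
    (hMb : ∀ x, |deriv Real.smoothTransition x| ≤ M) :
    |deriv (ψaux z₀ r) z| * |z - z₀| ≤ 3*M := by
  rw [(ψaux_hasDerivAt hr z).deriv]
  rcases le_or_gt (2*r) |z - z₀| with h | h
  · rw [st_deriv_zero_of_one_le, zero_mul, abs_zero, zero_mul]
    · positivity
    · rw [le_div_iff₀ (by positivity)]
      nlinarith [sq_abs (z - z₀), abs_nonneg (z - z₀)]
  · have h1 : |deriv Real.smoothTransition (((z - z₀)^2 - r^2) / (3*r^2))| ≤ M := hMb _
    have h2 : |2*(z - z₀)/(3*r^2)| * |z - z₀| ≤ 8/3 := by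
      rw [abs_div, abs_mul, abs_two]
      rw [div_mul_eq_mul_div, div_le_iff₀ (by positivity)]
      have : |3*r^2| = 3*r^2 := abs_of_pos (by positivity)
      rw [this]
      nlinarith [sq_abs (z - z₀), abs_nonneg (z - z₀)]
    calc |deriv Real.smoothTransition (((z - z₀)^2 - r^2) / (3*r^2))
          * (2*(z - z₀)/(3*r^2))| * |z - z₀|
        = |deriv Real.smoothTransition (((z - z₀)^2 - r^2) / (3*r^2))|
          * (|2*(z - z₀)/(3*r^2)| * |z - z₀|) := by rw [abs_mul]; ring
      _ ≤ M * (8/3) := by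
          apply mul_le_mul h1 h2 (by positivity) hM
      _ ≤ 3*M := by linarith

lemma ibp (φ : ℝ → ℝ) (a : ℝ → ℂ) (z₀ t r : ℝ) (ht : 0 < t) (hr : 0 < r)
    (hφ : ContDiff ℝ 2 φ) (hφ0 : deriv φ z₀ = 0)
    (h1 : ∀ z, 1 ≤ deriv (deriv φ) z)
    (ha : ContDiff ℝ 1 a) (hsupp : HasCompactSupport a) :
    Integrable (fun z : ℝ => (deriv (fun w => a w * (ψaux z₀ r w : ℂ)) z
          * (Complex.I * t * ((deriv φ z : ℝ) : ℂ))⁻¹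
        + (a z * (ψaux z₀ r z : ℂ))
          * (-(Complex.I * t * ((deriv (deriv φ) z : ℝ) : ℂ))
              / (Complex.I * t * ((deriv φ z : ℝ) : ℂ)) ^ 2))
      * Complex.exp (-Complex.I * t * (φ z : ℂ))) ∧
    ∫ z : ℝ, Complex.exp (-Complex.I * t * (φ z : ℂ)) * (a z * (ψaux z₀ r z : ℂ)) =
    ∫ z : ℝ, (deriv (fun w => a w * (ψaux z₀ r w : ℂ)) z
          * (Complex.I * t * ((deriv φ z : ℝ) : ℂ))⁻¹
        + (a z * (ψaux z₀ r z : ℂ))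
          * (-(Complex.I * t * ((deriv (deriv φ) z : ℝ) : ℂ))
              / (Complex.I * t * ((deriv φ z : ℝ) : ℂ)) ^ 2))
      * Complex.exp (-Complex.I * t * (φ z : ℂ)) := by
  -- notation
  set ψ : ℝ → ℝ := ψaux z₀ r with hψdef
  set E : ℝ → ℂ := fun z => Complex.exp (-Complex.I * t * (φ z : ℂ)) with hEdef
  set b : ℝ → ℂ := fun z => a z * (ψ z : ℂ) with hbdef
  set c : ℝ → ℂ := fun z => (Complex.I * t * ((deriv φ z : ℝ) : ℂ))⁻¹ with hcdef
  set c₂ : ℝ → ℂ := fun z => -(Complex.I * t * ((deriv (deriv φ) z : ℝ) : ℂ))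
      / (Complex.I * t * ((deriv φ z : ℝ) : ℂ)) ^ 2 with hc2def
  set G : ℝ → ℂ := fun z => (deriv b z * c z + b z * c₂ z) * E z with hGdef
  set H : ℝ → ℂ := fun z => -(b z * c z * E z) with hHdef
  set F : ℝ → ℂ := fun z => E z * b z - G z with hFdef
  -- basic smoothness facts
  have hφ1 : ContDiff ℝ 1 (deriv φ) := ((contDiff_succ_iff_deriv (n := 1)).mp hφ).2.2
  have hφ'd : Differentiable ℝ (deriv φ) := hφ1.differentiable (by norm_num)
  have hφ''c : Continuous (deriv (deriv φ)) := hφ1.continuous_deriv le_rfl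
  have hφ'c : Continuous (deriv φ) := hφ'd.continuous
  have hφc : Continuous φ := hφ.continuous
  have hb_cd : ContDiff ℝ 1 b := ha.mul (Complex.ofRealCLM.contDiff.comp (ψaux_contDiff z₀ r))
  have hb_d : Differentiable ℝ b := hb_cd.differentiable (by norm_num)
  have hb'c : Continuous (deriv b) := hb_cd.continuous_deriv le_rfl
  have hac : Continuous a := ha.continuous
  -- phase derivative nonvanishing
  have hlb := phase_lb φ z₀ hφ hφ0 h1
  have hφ'ne : ∀ z : ℝ, z ≠ z₀ → deriv φ z ≠ 0 := by
    intro z hz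
    have h2 : 0 < |z - z₀| := abs_pos.mpr (sub_ne_zero.mpr hz)
    have := lt_of_lt_of_le h2 (hlb z)
    exact fun h => by simp [h] at this
  have hdne : ∀ z : ℝ, z ≠ z₀ → (Complex.I * t * ((deriv φ z : ℝ) : ℂ)) ≠ 0 := by
    intro z hz
    simp only [mul_ne_zero_iff]
    exact ⟨⟨Complex.I_ne_zero, by exact_mod_cast ne_of_gt ht⟩,
      by exact_mod_cast hφ'ne z hz⟩
  -- E has derivative
  have hE : ∀ z : ℝ, HasDerivAt E (-Complex.I * t * ((deriv φ z : ℝ) : ℂ) * E z) z := by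
    intro z
    have hφz : HasDerivAt (fun w : ℝ => (φ w : ℂ)) (((deriv φ z : ℝ) : ℂ)) z :=
      ((hφ.differentiable (by norm_num) z).hasDerivAt).ofReal_comp
    have h2 : HasDerivAt (fun w : ℝ => -Complex.I * t * (φ w : ℂ))
        (-Complex.I * t * ((deriv φ z : ℝ) : ℂ)) z := hφz.const_mul _
    simpa [hEdef, mul_comm] using h2.cexp
  -- b vanishes near z₀
  have hb0 : ∀ z ∈ Metric.ball z₀ r, b z = 0 := by
    intro z hz
    have : |z - z₀| ≤ r := le_of_lt (by simpa [Real.dist_eq] using hz)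
    show a z * ((ψaux z₀ r z : ℝ) : ℂ) = 0
    rw [ψaux_zero hr this]; simp
  -- H has derivative F everywhere
  have hH : ∀ z : ℝ, HasDerivAt H (F z) z := by
    intro z
    by_cases hz : z = z₀
    · subst hz
      have hball : Metric.ball z r ∈ nhds z := Metric.ball_mem_nhds _ hr
      have hbev : b =ᶠ[nhds z] fun _ => (0:ℂ) := by
        filter_upwards [hball] with y hy; exact hb0 y hy
      have hHev : H =ᶠ[nhds z] fun _ => (0:ℂ) := by
        filter_upwards [hbev] with y hy; simp [hHdef, hy]
      have hderivb : deriv b z = 0 := by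
        rw [hbev.deriv_eq]; simp
      have hF0 : F z = 0 := by
        have hbz : b z = 0 := hbev.self_of_nhds
        simp [hFdef, hGdef, hbz, hderivb]
      rw [hF0] at *
      exact (hasDerivAt_const z (0:ℂ)).congr_of_eventuallyEq hHev
    · -- z ≠ z₀, use product/quotient rules
      have hne := hdne z hz
      have hb' : HasDerivAt b (deriv b z) z := (hb_d z).hasDerivAt
      have hd : HasDerivAt (fun w => Complex.I * t * ((deriv φ w : ℝ) : ℂ))
          (Complex.I * t * ((deriv (deriv φ) z : ℝ) : ℂ)) z :=
        (((hφ'd z).hasDerivAt).ofReal_comp).const_mul _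
      have hc' : HasDerivAt c (c₂ z) z := by
        have h := (hasDerivAt_const z (1:ℂ)).div hd hne
        simp only [Pi.div_def, one_div] at h
        convert h using 1
        rfl
        simp only [hc2def]
        ring
      have hprod : HasDerivAt (fun w => b w * c w * E w)
          ((deriv b z * c z + b z * c₂ z) * E z
            + b z * c z * (-Complex.I * t * ((deriv φ z : ℝ) : ℂ) * E z)) z :=
        (hb'.mul hc').mul (hE z)
      have heq : F z = -((deriv b z * c z + b z * c₂ z) * E z
            + b z * c z * (-Complex.I * t * ((deriv φ z : ℝ) : ℂ) * E z)) := by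
        have hcd : c z * (Complex.I * t * ((deriv φ z : ℝ) : ℂ)) = 1 :=
          inv_mul_cancel₀ hne
        simp only [hFdef, hGdef]
        linear_combination (-(E z * b z)) * hcd
      rw [heq]
      exact hprod.neg
  -- continuity of G
  have hGb : ∀ z ∈ Metric.ball z₀ r, deriv b z = 0 ∧ b z = 0 := by
    intro z hz
    have hbev : b =ᶠ[nhds z] fun _ => (0:ℂ) := by
      filter_upwards [Metric.isOpen_ball.mem_nhds hz] with y hy
      exact hb0 y hy
    exact ⟨by rw [hbev.deriv_eq]; simp, hbev.self_of_nhds⟩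
  have hEc : Continuous E := by
    apply Complex.continuous_exp.comp
    exact (continuous_const.mul (Complex.continuous_ofReal.comp hφc))
  have hGc : Continuous G := by
    rw [continuous_iff_continuousAt]
    intro z
    by_cases hz : z = z₀
    · subst hz
      have hGev : G =ᶠ[nhds z] fun _ => (0:ℂ) := by
        filter_upwards [Metric.ball_mem_nhds z hr] with y hy
        obtain ⟨h1', h2'⟩ := hGb y hy
        simp [hGdef, h1', h2']
      exact ContinuousAt.congr continuousAt_const hGev.symm
    · have hccA : ContinuousAt c z := by
        apply ContinuousAt.inv₀
        · exact (continuous_const.mul (Complex.continuous_ofReal.comp hφ'c)).continuousAt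
        · exact hdne z hz
      have hc2A : ContinuousAt c₂ z := by
        apply ContinuousAt.div
        · exact (continuous_const.mul
            (Complex.continuous_ofReal.comp hφ''c)).neg.continuousAt
        · exact ((continuous_const.mul
            (Complex.continuous_ofReal.comp hφ'c)).pow 2).continuousAt
        · exact pow_ne_zero 2 (hdne z hz)
      exact ((hb'c.continuousAt.mul hccA).add
        ((hb_d.continuous.continuousAt).mul hc2A)).mul hEc.continuousAt
  -- supports
  have haout : ∀ z : ℝ, z ∉ tsupport a → a z = 0 := fun z hz =>
    image_eq_zero_of_notMem_tsupport hz
  have hGout : ∀ z : ℝ, z ∉ tsupport a → G z = 0 := by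
    intro z hz
    have hopen : IsOpen (tsupport a)ᶜ := (isClosed_tsupport a).isOpen_compl
    have hbev : b =ᶠ[nhds z] fun _ => (0:ℂ) := by
      filter_upwards [hopen.mem_nhds hz] with y hy
      simp [hbdef, haout y hy]
    have h1' : deriv b z = 0 := by rw [hbev.deriv_eq]; simp
    simp [hGdef, h1', hbev.self_of_nhds]
  have hbEout : ∀ z : ℝ, z ∉ tsupport a → E z * b z = 0 := by
    intro z hz; simp [hbdef, haout z hz]
  have hG_int : Integrable G := by
    apply hGc.integrable_of_hasCompactSupport
    exact HasCompactSupport.intro hsupp hGout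
  have hbE_int : Integrable (fun z => E z * b z) := by
    apply (hEc.mul hb_d.continuous).integrable_of_hasCompactSupport
    exact HasCompactSupport.intro hsupp hbEout
  have hF_int : Integrable F := hbE_int.sub hG_int
  -- ∫ F = 0
  obtain ⟨R, hR⟩ := hsupp.isBounded.subset_closedBall 0
  set S : ℝ := max R 0 with hSdef
  have hS0 : 0 ≤ S := le_max_right _ _
  have hS : ∀ z ∈ tsupport a, |z| ≤ S := by
    intro z hzm
    have := hR hzm
    simp only [Metric.mem_closedBall, Real.dist_eq, sub_zero] at this
    exact le_trans this (le_max_left _ _)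
  have hRz : ∀ z : ℝ, S < |z| → z ∉ tsupport a := by
    intro z hzR hmem
    exact absurd (hS z hmem) (not_le.mpr hzR)
  have hFout : ∀ z : ℝ, z ∉ tsupport a → F z = 0 := by
    intro z hz
    simp only [hFdef, hbEout z hz, hGout z hz, sub_zero]
  have hFsupp : Function.support F ⊆ Ioc (-(S+1)) (S+1) := by
    intro z hz
    have hzm : z ∈ tsupport a := by
      by_contra h
      exact hz (hFout z h)
    have hzS : |z| ≤ S := hS z hzm
    constructor
    · linarith [neg_abs_le z]
    · linarith [le_abs_self z]
  have hHout : ∀ z : ℝ, z ∉ tsupport a → H z = 0 := by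
    intro z hz; simp [hHdef, hbdef, haout z hz]
  have hint0 : ∫ z : ℝ, F z = 0 := by
    rw [← intervalIntegral.integral_eq_integral_of_support_subset hFsupp]
    rw [intervalIntegral.integral_eq_sub_of_hasDerivAt
      (fun x _ => hH x) hF_int.intervalIntegrable]
    have h1' : H (S+1) = 0 := hHout _ (hRz _ (by rw [abs_of_nonneg (by linarith)]; linarith))
    have h2' : H (-(S+1)) = 0 := hHout _ (hRz _ (by rw [abs_neg, abs_of_nonneg (by linarith)]; linarith))
    rw [h1', h2', sub_zero]
  -- conclude
  have : (∫ z : ℝ, E z * b z) - ∫ z : ℝ, G z = 0 := by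
    rw [← integral_sub hbE_int hG_int]; exact hint0
  have hfinal : (∫ z : ℝ, E z * b z) = ∫ z : ℝ, G z := sub_eq_zero.mp this
  exact ⟨hG_int, hfinal⟩

set_option maxHeartbeats 2000000

/-- Lemma 5.4 (Schlag's stationary phase estimate).  The implicit constant
depends only on the upper bound `C'` for `φ''`. -/
theorem stationary_phase_estimate (C' : ℝ) (hC' : 1 ≤ C') :
    ∃ K > 0, ∀ (φ : ℝ → ℝ) (a : ℝ → ℂ) (z₀ t : ℝ), 0 < t →
      ContDiff ℝ 2 φ →
      deriv φ z₀ = 0 →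
      (∀ z, 1 ≤ deriv (deriv φ) z ∧ deriv (deriv φ) z ≤ C') →
      ContDiff ℝ 1 a →
      HasCompactSupport a →
      ‖∫ z : ℝ, Complex.exp (-Complex.I * t * (φ z : ℂ)) * a z‖
        ≤ K * ((∫ z in {z : ℝ | |z - z₀| < t ^ (-(1 / 2 : ℝ))}, ‖a z‖)
            + t⁻¹ * ∫ z in {z : ℝ | t ^ (-(1 / 2 : ℝ)) < |z - z₀|},
                (‖a z‖ / |z - z₀| ^ 2 + ‖deriv a z‖ / |z - z₀|)) := by
  obtain ⟨M, hM0, hMb⟩ := st_deriv_bound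
  refine ⟨3*M + C' + 5, by linarith, ?_⟩
  intro φ a z₀ t ht hφ hφ0 hφ'' ha hsupp
  set r : ℝ := t ^ (-(1 / 2 : ℝ)) with hrdef
  have hr : 0 < r := Real.rpow_pos_of_pos ht _
  have hr2 : r^2 = t⁻¹ := by
    rw [hrdef, sq, ← Real.rpow_add ht]
    norm_num
    exact Real.rpow_neg_one t
  have h1 : ∀ z, 1 ≤ deriv (deriv φ) z := fun z => (hφ'' z).1
  have hlb := phase_lb φ z₀ hφ hφ0 h1
  set S₁ : Set ℝ := {z : ℝ | |z - z₀| < r} with hS₁def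
  set S₂ : Set ℝ := {z : ℝ | r < |z - z₀|} with hS₂def
  have habsc : Continuous (fun z : ℝ => |z - z₀|) :=
    continuous_abs.comp (continuous_id.sub continuous_const)
  have hS₁m : MeasurableSet S₁ := (isOpen_lt habsc continuous_const).measurableSet
  have hS₂m : MeasurableSet S₂ := (isOpen_lt continuous_const habsc).measurableSet
  -- continuity facts
  have hac : Continuous a := ha.continuous
  have ha'c : Continuous (deriv a) := ha.continuous_deriv le_rfl
  have hφc : Continuous φ := hφ.continuous
  have hφ1 : ContDiff ℝ 1 (deriv φ) := ((contDiff_succ_iff_deriv (n := 1)).mp hφ).2.2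
  have hφ'd : Differentiable ℝ (deriv φ) := hφ1.differentiable (by norm_num)
  have hφ'c : Continuous (deriv φ) := hφ'd.continuous
  have hφ''c : Continuous (deriv (deriv φ)) := hφ1.continuous_deriv le_rfl
  have hψc : Continuous (ψaux z₀ r) := (ψaux_contDiff z₀ r).continuous
  have hψ'c : Continuous (deriv (ψaux z₀ r)) := (ψaux_contDiff z₀ r).continuous_deriv le_rfl
  have hEc : Continuous (fun z : ℝ => Complex.exp (-Complex.I * t * (φ z : ℂ))) :=
    Complex.continuous_exp.comp (continuous_const.mul (Complex.continuous_ofReal.comp hφc))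
  have hEnorm : ∀ z : ℝ, ‖Complex.exp (-Complex.I * t * (φ z : ℂ))‖ = 1 := by
    intro z
    rw [Complex.norm_exp]
    have : (-Complex.I * t * (φ z : ℂ)).re = 0 := by simp
    rw [this, Real.exp_zero]
  -- the derivative of b
  have hbderiv : ∀ z : ℝ, deriv (fun w => a w * (ψaux z₀ r w : ℂ)) z
      = deriv a z * (ψaux z₀ r z : ℂ) + a z * ((deriv (ψaux z₀ r) z : ℝ) : ℂ) := by
    intro z
    exact (((ha.differentiable (by norm_num) z).hasDerivAt).mul
      (((ψaux_contDiff z₀ r).differentiable (by norm_num) z).hasDerivAt.ofReal_comp)).deriv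
  -- integrability of basic functions
  have hagi : Integrable (fun z : ℝ => ‖a z‖) := hac.norm.integrable_of_hasCompactSupport hsupp.norm
  have ha'gi : Integrable (fun z : ℝ => ‖deriv a z‖) :=
    ha'c.norm.integrable_of_hasCompactSupport hsupp.deriv.norm
  set g : ℝ → ℝ := fun z => ‖a z‖ / |z - z₀| ^ 2 + ‖deriv a z‖ / |z - z₀| with hgdef
  have hgmeas : Measurable g := by
    apply Measurable.add
    · exact (hac.norm.measurable).div ((habsc.pow 2).measurable)
    · exact (ha'c.norm.measurable).div habsc.measurable
  have hgnonneg : ∀ z, 0 ≤ g z := by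
    intro z
    apply add_nonneg <;> positivity
  have hgS₂ : IntegrableOn g S₂ volume := by
    apply Integrable.mono' (g := fun z => ‖a z‖ / r^2 + ‖deriv a z‖ / r)
    · exact ((hagi.div_const _).add (ha'gi.div_const _)).restrict
    · exact (hgmeas.aestronglyMeasurable).restrict
    · filter_upwards [ae_restrict_mem hS₂m] with z hz
      have hz' : r < |z - z₀| := hz
      rw [Real.norm_eq_abs, abs_of_nonneg (hgnonneg z)]
      have h1' : ‖a z‖ / |z - z₀| ^ 2 ≤ ‖a z‖ / r^2 :=
        div_le_div_of_nonneg_left (norm_nonneg _) (by positivity) (by nlinarith)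
      have h2' : ‖deriv a z‖ / |z - z₀| ≤ ‖deriv a z‖ / r :=
        div_le_div_of_nonneg_left (norm_nonneg _) hr (le_of_lt hz')
      linarith
  have hfar_nonneg : 0 ≤ ∫ z in S₂, g z := setIntegral_nonneg hS₂m fun z _ => hgnonneg z
  have hnear_nonneg : 0 ≤ ∫ z in S₁, ‖a z‖ := setIntegral_nonneg hS₁m fun z _ => norm_nonneg _
  -- integrability of the pieces
  have haout : ∀ z : ℝ, z ∉ tsupport a → a z = 0 := fun z hz =>
    image_eq_zero_of_notMem_tsupport hz
  have hNint : Integrable (fun z : ℝ =>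
      Complex.exp (-Complex.I * t * (φ z : ℂ)) * (a z * ((1 - ψaux z₀ r z : ℝ) : ℂ))) := by
    apply Continuous.integrable_of_hasCompactSupport
    · exact hEc.mul (hac.mul (Complex.continuous_ofReal.comp (continuous_const.sub hψc)))
    · apply HasCompactSupport.intro hsupp
      intro z hz
      simp [haout z hz]
  have hbEint : Integrable (fun z : ℝ =>
      Complex.exp (-Complex.I * t * (φ z : ℂ)) * (a z * ((ψaux z₀ r z : ℝ) : ℂ))) := by
    apply Continuous.integrable_of_hasCompactSupport
    · exact hEc.mul (hac.mul (Complex.continuous_ofReal.comp hψc))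
    · apply HasCompactSupport.intro hsupp
      intro z hz
      simp [haout z hz]
  -- splitting
  have hsplit : (∫ z : ℝ, Complex.exp (-Complex.I * t * (φ z : ℂ)) * a z)
      = (∫ z : ℝ, Complex.exp (-Complex.I * t * (φ z : ℂ)) * (a z * ((1 - ψaux z₀ r z : ℝ) : ℂ)))
      + ∫ z : ℝ, Complex.exp (-Complex.I * t * (φ z : ℂ)) * (a z * ((ψaux z₀ r z : ℝ) : ℂ)) := by
    rw [← integral_add hNint hbEint]
    congr 1
    funext z
    push_cast
    ring
  have hnorm_split : ‖∫ z : ℝ, Complex.exp (-Complex.I * t * (φ z : ℂ)) * a z‖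
      ≤ ‖∫ z : ℝ, Complex.exp (-Complex.I * t * (φ z : ℂ)) * (a z * ((1 - ψaux z₀ r z : ℝ) : ℂ))‖
      + ‖∫ z : ℝ, Complex.exp (-Complex.I * t * (φ z : ℂ)) * (a z * ((ψaux z₀ r z : ℝ) : ℂ))‖ := by
    rw [hsplit]
    exact norm_add_le _ _
  -- ==================== near piece ====================
  have hnear : ‖∫ z : ℝ, Complex.exp (-Complex.I * t * (φ z : ℂ)) * (a z * ((1 - ψaux z₀ r z : ℝ) : ℂ))‖
      ≤ (∫ z in S₁, ‖a z‖) + 4 * (t⁻¹ * ∫ z in S₂, g z) := by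
    have step1 := norm_integral_le_integral_norm (μ := volume)
      (fun z : ℝ => Complex.exp (-Complex.I * t * (φ z : ℂ)) * (a z * ((1 - ψaux z₀ r z : ℝ) : ℂ)))
    have hind1 : Integrable (S₁.indicator fun z => ‖a z‖) :=
      (integrable_indicator_iff hS₁m).mpr hagi.integrableOn
    have hind2 : Integrable (S₂.indicator fun z => 4 * t⁻¹ * g z) := by
      refine (integrable_indicator_iff hS₂m).mpr ?_
      exact (hgS₂.const_mul _)
    have step2 : (∫ z : ℝ, ‖Complex.exp (-Complex.I * t * (φ z : ℂ))
          * (a z * ((1 - ψaux z₀ r z : ℝ) : ℂ))‖)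
        ≤ ∫ z : ℝ, (S₁.indicator (fun z => ‖a z‖) z + S₂.indicator (fun z => 4 * t⁻¹ * g z) z) := by
      apply integral_mono_ae
      · apply Integrable.norm
        exact hNint
      · exact hind1.add hind2
      · have hfin : (volume : Measure ℝ) ({z₀ - r, z₀ + r} : Set ℝ) = 0 :=
          (Set.toFinite _).measure_zero _
        filter_upwards [compl_mem_ae_iff.mpr hfin] with z hz
        have hzne : |z - z₀| ≠ r := by
          intro h
          apply hz
          simp only [Set.mem_insert_iff, Set.mem_singleton_iff]
          rcases abs_eq hr.le |>.mp h with h' | h'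
          · right; linarith
          · left; linarith
        rw [norm_mul, hEnorm, one_mul, norm_mul]
        rcases lt_trichotomy (|z - z₀|) r with hlt | heq | hgt
        · have hψ0 : ψaux z₀ r z = 0 := ψaux_zero hr hlt.le
          have hin : z ∈ S₁ := hlt
          rw [indicator_of_mem hin]
          have hout : S₂.indicator (fun z => 4 * t⁻¹ * g z) z ≥ 0 := by
            apply indicator_nonneg
            intro y _
            have := hgnonneg y
            positivity
          have : ‖a z‖ * ‖((1 - ψaux z₀ r z : ℝ) : ℂ)‖ ≤ ‖a z‖ := by
            rw [hψ0]
            simp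
          linarith
        · exact absurd heq hzne
        · have hin : z ∈ S₂ := hgt
          have hout : z ∉ S₁ := by
            simp only [hS₁def, mem_setOf_eq, not_lt]
            linarith
          rw [indicator_of_notMem hout, indicator_of_mem hin, zero_add]
          rcases le_or_gt (2*r) (|z - z₀|) with h2r | h2r
          · have hψ1 : ψaux z₀ r z = 1 := ψaux_one hr h2r
            rw [hψ1]
            simp only [sub_self, Complex.ofReal_zero, norm_zero, mul_zero]
            have := hgnonneg z
            positivity
          · -- r < |z-z₀| < 2r : trivial bound beaten by 4 t⁻¹ / |z-z₀|²
            have hD : 0 < |z - z₀| := lt_trans hr hgt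
            have hD2 : |z - z₀|^2 < 4 * t⁻¹ := by
              rw [← hr2]
              nlinarith
            have hb1 : ‖a z‖ * ‖((1 - ψaux z₀ r z : ℝ) : ℂ)‖ ≤ ‖a z‖ := by
              have h01 : |1 - ψaux z₀ r z| ≤ 1 := by
                rw [abs_le]
                constructor
                · linarith [ψaux_le_one z₀ r z]
                · linarith [ψaux_nonneg z₀ r z]
              calc ‖a z‖ * ‖((1 - ψaux z₀ r z : ℝ) : ℂ)‖
                  = ‖a z‖ * |1 - ψaux z₀ r z| := by rw [Complex.norm_real, Real.norm_eq_abs]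
                _ ≤ ‖a z‖ * 1 := by
                    apply mul_le_mul_of_nonneg_left h01 (norm_nonneg _)
                _ = ‖a z‖ := mul_one _
            have hb2 : ‖a z‖ ≤ 4 * t⁻¹ * (‖a z‖ / |z - z₀|^2) := by
              rw [mul_div_assoc', le_div_iff₀ (by positivity)]
              nlinarith [norm_nonneg (a z)]
            have hb3 : 4 * t⁻¹ * (‖a z‖ / |z - z₀|^2) ≤ 4 * t⁻¹ * g z := by
              apply mul_le_mul_of_nonneg_left _ (by positivity)
              rw [hgdef]
              simp only
              have : 0 ≤ ‖deriv a z‖ / |z - z₀| := by positivity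
              linarith
            linarith
    have step3 : (∫ z : ℝ, (S₁.indicator (fun z => ‖a z‖) z + S₂.indicator (fun z => 4 * t⁻¹ * g z) z))
        = (∫ z in S₁, ‖a z‖) + 4 * (t⁻¹ * ∫ z in S₂, g z) := by
      rw [integral_add hind1 hind2, integral_indicator hS₁m, integral_indicator hS₂m,
        integral_const_mul, mul_assoc]
    exact step1.trans (step2.trans (le_of_eq step3))
  -- ==================== far piece ====================
  obtain ⟨hGint, hibp⟩ := ibp φ a z₀ t r ht hr hφ hφ0 h1 ha hsupp
  have hfar : ‖∫ z : ℝ, Complex.exp (-Complex.I * t * (φ z : ℂ)) * (a z * ((ψaux z₀ r z : ℝ) : ℂ))‖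
      ≤ (3*M + C') * (t⁻¹ * ∫ z in S₂, g z) := by
    rw [hibp]
    refine le_trans (norm_integral_le_integral_norm (μ := volume) _) ?_
    have hind : Integrable (S₂.indicator fun z => (3*M + C') * t⁻¹ * g z) :=
      (integrable_indicator_iff hS₂m).mpr (hgS₂.const_mul _)
    have hptwise : ∀ z : ℝ, ‖(deriv (fun w => a w * (ψaux z₀ r w : ℂ)) z
          * (Complex.I * t * ((deriv φ z : ℝ) : ℂ))⁻¹
        + (a z * (ψaux z₀ r z : ℂ))
          * (-(Complex.I * t * ((deriv (deriv φ) z : ℝ) : ℂ))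
              / (Complex.I * t * ((deriv φ z : ℝ) : ℂ)) ^ 2))
      * Complex.exp (-Complex.I * t * (φ z : ℂ))‖
        ≤ S₂.indicator (fun z => (3*M + C') * t⁻¹ * g z) z := by
      intro z
      rw [norm_mul, hEnorm, mul_one]
      rcases le_or_gt (|z - z₀|) r with hle | hgt
      · -- inside: everything vanishes
        have hψ0 : ψaux z₀ r z = 0 := ψaux_zero hr hle
        have hψ'0 : deriv (ψaux z₀ r) z = 0 := ψaux_deriv_zero hr hle
        have hdb0 : deriv (fun w => a w * (ψaux z₀ r w : ℂ)) z = 0 := by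
          rw [hbderiv z, hψ0, hψ'0]
          simp
        have hout : z ∉ S₂ := by
          simp only [hS₂def, mem_setOf_eq, not_lt]
          exact hle
        rw [indicator_of_notMem hout, hdb0, hψ0]
        simp
      · have hin : z ∈ S₂ := hgt
        rw [indicator_of_mem hin]
        set D : ℝ := |z - z₀| with hDdef
        have hD : 0 < D := lt_trans hr hgt
        have hDlb : D ≤ |deriv φ z| := hlb z
        have hφ''pos : 0 < deriv (deriv φ) z := lt_of_lt_of_le zero_lt_one (h1 z)
        -- norm of c
        have hcnorm : ‖(Complex.I * t * ((deriv φ z : ℝ) : ℂ))⁻¹‖ = (t * |deriv φ z|)⁻¹ := by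
          rw [norm_inv, norm_mul, norm_mul, Complex.norm_I, one_mul, Complex.norm_real,
            Complex.norm_real, Real.norm_eq_abs, Real.norm_eq_abs, abs_of_pos ht]
        have hcbound : ‖(Complex.I * t * ((deriv φ z : ℝ) : ℂ))⁻¹‖ ≤ (t * D)⁻¹ := by
          rw [hcnorm]
          apply inv_anti₀ (by positivity)
          exact mul_le_mul_of_nonneg_left hDlb ht.le
        -- norm of c₂
        have hc2norm : ‖-(Complex.I * t * ((deriv (deriv φ) z : ℝ) : ℂ))
              / (Complex.I * t * ((deriv φ z : ℝ) : ℂ)) ^ 2‖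
            = (t * |deriv (deriv φ) z|) / (t * |deriv φ z|)^2 := by
          simp only [norm_div, norm_neg, norm_pow, norm_mul, Complex.norm_I, one_mul,
            Complex.norm_real, Real.norm_eq_abs]
          rw [abs_of_pos ht]
        have hc2bound : ‖-(Complex.I * t * ((deriv (deriv φ) z : ℝ) : ℂ))
              / (Complex.I * t * ((deriv φ z : ℝ) : ℂ)) ^ 2‖ ≤ C' / (t * D^2) := by
          rw [hc2norm]
          have hnum : t * |deriv (deriv φ) z| ≤ t * C' := by
            apply mul_le_mul_of_nonneg_left _ ht.le
            rw [abs_of_pos hφ''pos]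
            exact (hφ'' z).2
          have hden : (t * D)^2 ≤ (t * |deriv φ z|)^2 := by
            apply pow_le_pow_left₀ (by positivity)
            exact mul_le_mul_of_nonneg_left hDlb ht.le
          calc (t * |deriv (deriv φ) z|) / (t * |deriv φ z|)^2
              ≤ (t * C') / (t * D)^2 := by
                apply div_le_div₀ (by positivity) hnum (by positivity) hden
            _ = C' / (t * D^2) := by
                field_simp
        -- norm of deriv b
        have hψ'bound : |deriv (ψaux z₀ r) z| ≤ 3*M/D := by
          rw [le_div_iff₀ hD]
          exact ψaux_deriv_bound hr hM0 hMb
        have hdbbound : ‖deriv (fun w => a w * (ψaux z₀ r w : ℂ)) z‖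
            ≤ ‖deriv a z‖ + ‖a z‖ * (3*M/D) := by
          rw [hbderiv z]
          refine le_trans (norm_add_le _ _) ?_
          rw [norm_mul, norm_mul]
          have h1' : ‖((ψaux z₀ r z : ℝ) : ℂ)‖ ≤ 1 := by
            rw [Complex.norm_real, Real.norm_eq_abs, abs_of_nonneg (ψaux_nonneg z₀ r z)]
            exact ψaux_le_one z₀ r z
          have h2' : ‖((deriv (ψaux z₀ r) z : ℝ) : ℂ)‖ ≤ 3*M/D := by
            rw [Complex.norm_real, Real.norm_eq_abs]
            exact hψ'bound
          have := mul_le_mul_of_nonneg_left h1' (norm_nonneg (deriv a z))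
          have := mul_le_mul_of_nonneg_left h2' (norm_nonneg (a z))
          nlinarith [norm_nonneg (deriv a z), norm_nonneg (a z)]
        have hbbound : ‖a z * ((ψaux z₀ r z : ℝ) : ℂ)‖ ≤ ‖a z‖ := by
          rw [norm_mul]
          have h1' : ‖((ψaux z₀ r z : ℝ) : ℂ)‖ ≤ 1 := by
            rw [Complex.norm_real, Real.norm_eq_abs, abs_of_nonneg (ψaux_nonneg z₀ r z)]
            exact ψaux_le_one z₀ r z
          nlinarith [norm_nonneg (a z)]
        -- assemble
        set A : ℝ := ‖a z‖ with hAdef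
        set B : ℝ := ‖deriv a z‖ with hBdef
        have hA : 0 ≤ A := norm_nonneg _
        have hB : 0 ≤ B := norm_nonneg _
        have hchain : ‖deriv (fun w => a w * (ψaux z₀ r w : ℂ)) z
              * (Complex.I * t * ((deriv φ z : ℝ) : ℂ))⁻¹
            + (a z * (ψaux z₀ r z : ℂ))
              * (-(Complex.I * t * ((deriv (deriv φ) z : ℝ) : ℂ))
                  / (Complex.I * t * ((deriv φ z : ℝ) : ℂ)) ^ 2)‖
            ≤ (B + A * (3*M/D)) * (t * D)⁻¹ + A * (C' / (t * D^2)) := by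
          refine le_trans (norm_add_le _ _) ?_
          rw [norm_mul, norm_mul]
          have t1 := mul_le_mul hdbbound hcbound (norm_nonneg _) (by positivity)
          have t2 := mul_le_mul hbbound hc2bound (norm_nonneg _) hA
          linarith
        refine le_trans hchain ?_
        have hkey : (B + A * (3*M/D)) * (t * D)⁻¹ + A * (C' / (t * D^2))
            ≤ (3*M + C') * t⁻¹ * (A / D^2 + B / D) := by
          have e1 : (B + A * (3*M/D)) * (t * D)⁻¹ + A * (C' / (t * D^2))
              = (B*D + 3*M*A + C'*A) / (t*D^2) := by
            field_simp
          have e2 : (3*M + C') * t⁻¹ * (A / D^2 + B / D)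
              = ((3*M + C')*A + (3*M + C')*(B*D)) / (t*D^2) := by
            field_simp
          rw [e1, e2, div_le_div_iff_of_pos_right (by positivity)]
          nlinarith [mul_nonneg hM0 (mul_nonneg hB hD.le),
            mul_nonneg (sub_nonneg.mpr hC') (mul_nonneg hB hD.le)]
        exact le_trans hkey (le_of_eq (by rw [hgdef]))
    calc (∫ z : ℝ, ‖(deriv (fun w => a w * (ψaux z₀ r w : ℂ)) z
          * (Complex.I * t * ((deriv φ z : ℝ) : ℂ))⁻¹
        + (a z * (ψaux z₀ r z : ℂ))
          * (-(Complex.I * t * ((deriv (deriv φ) z : ℝ) : ℂ))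
              / (Complex.I * t * ((deriv φ z : ℝ) : ℂ)) ^ 2))
      * Complex.exp (-Complex.I * t * (φ z : ℂ))‖)
        ≤ ∫ z : ℝ, S₂.indicator (fun z => (3*M + C') * t⁻¹ * g z) z := by
          apply integral_mono hGint.norm hind hptwise
      _ = (3*M + C') * (t⁻¹ * ∫ z in S₂, g z) := by
          rw [integral_indicator hS₂m, integral_const_mul, mul_assoc]
  -- ==================== conclusion ====================
  have hY : 0 ≤ t⁻¹ * ∫ z in S₂, g z := mul_nonneg (inv_nonneg.mpr ht.le) hfar_nonneg
  calc ‖∫ z : ℝ, Complex.exp (-Complex.I * t * (φ z : ℂ)) * a z‖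
      ≤ ((∫ z in S₁, ‖a z‖) + 4 * (t⁻¹ * ∫ z in S₂, g z))
        + (3*M + C') * (t⁻¹ * ∫ z in S₂, g z) := by
        refine le_trans hnorm_split ?_
        exact add_le_add hnear hfar
    _ ≤ (3*M + C' + 5) * ((∫ z in S₁, ‖a z‖) + t⁻¹ * ∫ z in S₂, g z) := by
        nlinarith [hnear_nonneg, hY, mul_nonneg hM0 hnear_nonneg,
          mul_nonneg (le_trans zero_le_one hC') hnear_nonneg,
          mul_nonneg hM0 hY, mul_nonneg (le_trans zero_le_one hC') hY]
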